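/- If γ₁, γ₂ ∈ SU(2) anticommute (γ₁γ₂ = −γ₂γ₁), then there exists U ∈ SU(2) and λ ∈ ℂ with |λ| = 1 such that γ₁ = U† diag(−i, i) U and γ₂ = U† [[0, −λ],[λ⁻¹, 0]] U. -/

import Mathlib

open Complex Matrix

private lemma trace_zero' (A00 A01 A10 A11 B00 B01 B10 B11 : ℂ)
    (H1 : A00*A11 - A01*A10 = 1) (H2 : B00*B11 - B01*B10 = 1)
    (e00 : A00*B00 + A01*B10 = -(B00*A00 + B01*A10))
    (e01 : A00*B01 + A01*B11 = -(B00*A01 + B01*A11))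
    (e10 : A10*B00 + A11*B10 = -(B10*A00 + B11*A10))
    (e11 : A10*B01 + A11*B11 = -(B10*A01 + B11*A11)) :
    A00 + A11 = 0 ∧ B00 + B11 = 0 := by
  have h5 : A00*B00 = A11*B11 := by linear_combination (e00 - e11)/2
  have h6 : (-(A01*A10))*(B00+B11) + A00*B00*(A00+A11) = 0 := by
    linear_combination ((-A10)*e01 - A01*e10 + (A00+A11)*e00)/2
  have ht : B00 + B11 = 0 := by
    linear_combination (-(B00+B11))*H1 + h6 + (-A00)*h5
  have hP : B00*(A00+A11) = 0 := by linear_combination h5 + A11*ht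
  have hQ : B01*(A00+A11) = 0 := by linear_combination e01 - A01*ht
  have hs : A00 + A11 = 0 := by
    linear_combination (-(A00+A11))*H2 + B11*hP + (-B10)*hQ
  exact ⟨hs, ht⟩

private lemma su2_entries' (A : Matrix (Fin 2) (Fin 2) ℂ)
    (hu : A ∈ Matrix.unitaryGroup (Fin 2) ℂ) (hd : A.det = 1) :
    A 1 1 = starRingEnd ℂ (A 0 0) ∧ A 1 0 = -starRingEnd ℂ (A 0 1) := by
  have h1 : A * star A = 1 := (Matrix.mem_unitaryGroup_iff).mp hu
  have h2 : A * A.adjugate = 1 := by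
    rw [Matrix.mul_adjugate, hd, one_smul]
  have hinv : star A = A.adjugate := by
    rw [← Matrix.inv_eq_right_inv h1, ← Matrix.inv_eq_right_inv h2]
  rw [Matrix.adjugate_fin_two] at hinv
  have e00 := (Matrix.ext_iff.mpr hinv) 0 0
  have e01 := (Matrix.ext_iff.mpr hinv) 0 1
  simp only [Matrix.star_apply, Matrix.conjTranspose_apply, Matrix.cons_val', Matrix.cons_val_zero,
    Matrix.cons_val_one, Matrix.head_cons, Matrix.empty_val', Matrix.cons_val_fin_one,
    Matrix.head_fin_const, Matrix.of_apply] at e00 e01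
  refine ⟨e00.symm, ?_⟩
  have := congrArg (starRingEnd ℂ) e01
  simpa [Complex.conj_conj] using this

private lemma offdiag_form' (M : Matrix (Fin 2) (Fin 2) ℂ)
    (hu : M ∈ Matrix.unitaryGroup (Fin 2) ℂ) (hd : M.det = 1)
    (h00 : M 0 0 = 0) (h11 : M 1 1 = 0) :
    ∃ lam : ℂ, ‖lam‖ = 1 ∧ M = !![0, -lam; lam⁻¹, 0] := by
  have hdet : -(M 0 1 * M 1 0) = 1 := by
    have := Matrix.det_fin_two M
    rw [hd, h00, h11] at this
    linear_combination -this
  refine ⟨-(M 0 1), ?_, ?_⟩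
  · have h1 : M * star M = 1 := (Matrix.mem_unitaryGroup_iff).mp hu
    have e := (Matrix.ext_iff.mpr h1) 0 0
    simp only [Matrix.mul_apply, Fin.sum_univ_two, Matrix.star_apply,
      Matrix.conjTranspose_apply, Matrix.one_apply_eq] at e
    rw [h00] at e
    simp only [mul_zero, zero_mul, star_zero, zero_add] at e
    have e2 : M 0 1 * (starRingEnd ℂ) (M 0 1) = 1 := e
    rw [Complex.mul_conj] at e2
    have hns : Complex.normSq (M 0 1) = 1 := by exact_mod_cast e2
    have habs : ‖M 0 1‖ = 1 := by
      have := Complex.sq_norm (M 0 1)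
      nlinarith [norm_nonneg (M 0 1)]
    rw [norm_neg, habs]
  · have h10 : M 1 0 = (-(M 0 1))⁻¹ := by
      apply eq_inv_of_mul_eq_one_right
      linear_combination hdet
    ext i j
    fin_cases i <;> fin_cases j <;> simp [h00, h11, h10]

private lemma diag_form' (A : Matrix (Fin 2) (Fin 2) ℂ)
    (hu : A ∈ Matrix.unitaryGroup (Fin 2) ℂ) (hd : A.det = 1)
    (htr : A 0 0 + A 1 1 = 0) :
    ∃ U, U ∈ Matrix.specialUnitaryGroup (Fin 2) ℂ ∧
      U * A = !![(-I), 0; 0, I] * U := by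
  obtain ⟨hA11, hA10⟩ := su2_entries' A hu hd
  set a := A 0 0 with ha
  set b := A 0 1 with hb
  have K1 : starRingEnd ℂ a = -a := by rw [← hA11]; linear_combination htr
  have K2 : b * starRingEnd ℂ b = 1 + a^2 := by
    have hdet := Matrix.det_fin_two A
    rw [hd, hA11, hA10, K1] at hdet
    linear_combination -hdet
  have hre : a.re = 0 := by
    have := congrArg Complex.re K1
    simp at this
    linarith
  set t := a.im with htdef
  have hat : a = (t:ℂ) * I := by
    apply Complex.ext <;> simp [hre, htdef]
  have hb2 : Complex.normSq b = 1 - t^2 := by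
    have h' : (Complex.normSq b : ℂ) = ((1 - t^2 : ℝ) : ℂ) := by
      rw [← Complex.mul_conj]
      push_cast
      rw [hat] at K2
      linear_combination K2 + (t:ℂ)^2 * Complex.I_sq
    exact_mod_cast h'
  have hmt : -1 ≤ t := by nlinarith [Complex.normSq_nonneg b]
  rcases eq_or_lt_of_le hmt with hm1 | hm1
  · -- t = -1 : A is already diagonal, take U = 1
    have hb0 : b = 0 := by
      have : Complex.normSq b = 0 := by rw [hb2, ← hm1]; ring
      exact Complex.normSq_eq_zero.mp this
    have haI : a = -I := by rw [hat, ← hm1]; push_cast; ring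
    refine ⟨1, Submonoid.one_mem _, ?_⟩
    rw [one_mul, mul_one]
    ext i j
    fin_cases i <;> fin_cases j <;>
      simp [← ha, ← hb, hA11, hA10, haI, hb0, K1]
  · -- t > -1 : explicit U
    set r : ℝ := Real.sqrt (2*(1+t)) with hrdef
    have hrpos : 0 < r := Real.sqrt_pos.mpr (by linarith)
    have hr2 : r^2 = 2*(1+t) := Real.sq_sqrt (by linarith)
    set c := starRingEnd ℂ b with hc
    set U : Matrix (Fin 2) (Fin 2) ℂ :=
      !![-c/r, -(a+I)/r; -(a+I)/r, -b/r] with hU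
    have K4 : (r:ℂ) ≠ 0 := by exact_mod_cast hrpos.ne'
    have K3 : (r:ℂ)^2 = 2 - 2*I*a := by
      have h' : ((r:ℂ))^2 = ((2*(1+t) : ℝ) : ℂ) := by
        exact_mod_cast congrArg (fun x : ℝ => (x:ℂ)) hr2
      push_cast at h'
      rw [hat]
      linear_combination h' + 2*(t:ℂ)*Complex.I_sq
    have hdetU : U.det = 1 := by
      rw [hU, Matrix.det_fin_two_of]
      field_simp
      linear_combination K2 - K3 - Complex.I_sq
    have hUU : U * star U = 1 := by
      ext i j
      fin_cases i <;> fin_cases j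
      · simp only [hU, Matrix.mul_apply, Fin.sum_univ_two, Matrix.star_apply,
          Matrix.conjTranspose_apply, Matrix.cons_val', Matrix.cons_val_zero,
          Matrix.cons_val_one, Matrix.head_cons, Matrix.empty_val',
          Matrix.cons_val_fin_one, Matrix.head_fin_const, Matrix.of_apply,
          Matrix.one_apply, map_div₀, map_neg, map_add, Complex.conj_conj,
          Complex.conj_ofReal, Complex.conj_I, hc, K1]
        norm_num
        field_simp
        linear_combination K2 + ((I:ℂ)+a)*K1 - Complex.I_sq - K3
      · simp only [hU, Matrix.mul_apply, Fin.sum_univ_two, Matrix.star_apply,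
          Matrix.conjTranspose_apply, Matrix.cons_val', Matrix.cons_val_zero,
          Matrix.cons_val_one, Matrix.head_cons, Matrix.empty_val',
          Matrix.cons_val_fin_one, Matrix.head_fin_const, Matrix.of_apply,
          Matrix.one_apply, map_div₀, map_neg, map_add, Complex.conj_conj,
          Complex.conj_ofReal, Complex.conj_I, hc, K1]
        norm_num
        field_simp
        linear_combination ((starRingEnd ℂ) b) * K1
      · simp only [hU, Matrix.mul_apply, Fin.sum_univ_two, Matrix.star_apply,
          Matrix.conjTranspose_apply, Matrix.cons_val', Matrix.cons_val_zero,
          Matrix.cons_val_one, Matrix.head_cons, Matrix.empty_val',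
          Matrix.cons_val_fin_one, Matrix.head_fin_const, Matrix.of_apply,
          Matrix.one_apply, map_div₀, map_neg, map_add, Complex.conj_conj,
          Complex.conj_ofReal, Complex.conj_I, hc, K1]
        norm_num
        field_simp
        linear_combination (b) * K1
      · simp only [hU, Matrix.mul_apply, Fin.sum_univ_two, Matrix.star_apply,
          Matrix.conjTranspose_apply, Matrix.cons_val', Matrix.cons_val_zero,
          Matrix.cons_val_one, Matrix.head_cons, Matrix.empty_val',
          Matrix.cons_val_fin_one, Matrix.head_fin_const, Matrix.of_apply,
          Matrix.one_apply, map_div₀, map_neg, map_add, Complex.conj_conj,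
          Complex.conj_ofReal, Complex.conj_I, hc, K1]
        norm_num
        field_simp
        linear_combination K2 + ((I:ℂ)+a)*K1 - Complex.I_sq - K3
    refine ⟨U, Matrix.mem_specialUnitaryGroup_iff.mpr
      ⟨Matrix.mem_unitaryGroup_iff.mpr hUU, hdetU⟩, ?_⟩
    have hAform : A = !![a, b; -c, -a] := by
      rw [Matrix.eta_fin_two A, hA11, K1, hA10, ← ha, ← hb]
    rw [hAform]
    ext i j
    fin_cases i <;> fin_cases j
    · simp only [hU, Matrix.mul_apply, Fin.sum_univ_two, Matrix.cons_val',
        Matrix.cons_val_zero, Matrix.cons_val_one, Matrix.head_cons,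
        Matrix.empty_val', Matrix.cons_val_fin_one, Matrix.head_fin_const,
        Matrix.of_apply, Fin.zero_eta, Fin.mk_one]
      field_simp
      ring
    · simp only [hU, Matrix.mul_apply, Fin.sum_univ_two, Matrix.cons_val',
        Matrix.cons_val_zero, Matrix.cons_val_one, Matrix.head_cons,
        Matrix.empty_val', Matrix.cons_val_fin_one, Matrix.head_fin_const,
        Matrix.of_apply, Fin.zero_eta, Fin.mk_one]
      field_simp
      linear_combination -K2 - Complex.I_sq
    · simp only [hU, Matrix.mul_apply, Fin.sum_univ_two, Matrix.cons_val',
        Matrix.cons_val_zero, Matrix.cons_val_one, Matrix.head_cons,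
        Matrix.empty_val', Matrix.cons_val_fin_one, Matrix.head_fin_const,
        Matrix.of_apply, Fin.zero_eta, Fin.mk_one]
      field_simp
      linear_combination K2 + Complex.I_sq
    · simp only [hU, Matrix.mul_apply, Fin.sum_univ_two, Matrix.cons_val',
        Matrix.cons_val_zero, Matrix.cons_val_one, Matrix.head_cons,
        Matrix.empty_val', Matrix.cons_val_fin_one, Matrix.head_fin_const,
        Matrix.of_apply, Fin.zero_eta, Fin.mk_one]
      field_simp
      ring

/-- Anticommuting elements of SU(2) can simultaneously be brought into the normal
form diag(−i,i) and [[0,−λ],[λ⁻¹,0]] with |λ| = 1, by a common SU(2) conjugation. -/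
theorem anticommuting_SU2_normal_form
    (γ₁ γ₂ : Matrix.specialUnitaryGroup (Fin 2) ℂ)
    (h : (γ₁ : Matrix (Fin 2) (Fin 2) ℂ) * (γ₂ : Matrix (Fin 2) (Fin 2) ℂ) =
        -((γ₂ : Matrix (Fin 2) (Fin 2) ℂ) * (γ₁ : Matrix (Fin 2) (Fin 2) ℂ))) :
    ∃ U ∈ Matrix.specialUnitaryGroup (Fin 2) ℂ, ∃ lam : ℂ, ‖lam‖ = 1 ∧
      (γ₁ : Matrix (Fin 2) (Fin 2) ℂ) = Uᴴ * !![(-I), 0; 0, I] * U ∧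
      (γ₂ : Matrix (Fin 2) (Fin 2) ℂ) = Uᴴ * !![0, (-lam); lam⁻¹, 0] * U := by
  obtain ⟨hu1, hd1⟩ := Matrix.mem_specialUnitaryGroup_iff.mp γ₁.2
  obtain ⟨hu2, hd2⟩ := Matrix.mem_specialUnitaryGroup_iff.mp γ₂.2
  set A := (γ₁ : Matrix (Fin 2) (Fin 2) ℂ) with hA
  set B := (γ₂ : Matrix (Fin 2) (Fin 2) ℂ) with hB
  have e00 := (Matrix.ext_iff.mpr h) 0 0
  have e01 := (Matrix.ext_iff.mpr h) 0 1
  have e10 := (Matrix.ext_iff.mpr h) 1 0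
  have e11 := (Matrix.ext_iff.mpr h) 1 1
  simp only [Matrix.mul_apply, Fin.sum_univ_two, Matrix.neg_apply] at e00 e01 e10 e11
  have H1 : A 0 0 * A 1 1 - A 0 1 * A 1 0 = 1 := by rw [← Matrix.det_fin_two]; exact hd1
  have H2 : B 0 0 * B 1 1 - B 0 1 * B 1 0 = 1 := by rw [← Matrix.det_fin_two]; exact hd2
  obtain ⟨hs, ht⟩ := trace_zero' _ _ _ _ _ _ _ _ H1 H2 e00 e01 e10 e11
  obtain ⟨U, hUmem, hUA⟩ := diag_form' A hu1 hd1 hs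
  obtain ⟨hUu, hUdet⟩ := Matrix.mem_specialUnitaryGroup_iff.mp hUmem
  have hUU : U * Uᴴ = 1 := Matrix.mem_unitaryGroup_iff.mp hUu
  have hU'U : Uᴴ * U = 1 := Matrix.mem_unitaryGroup_iff'.mp hUu
  have key : ∀ P Q : Matrix (Fin 2) (Fin 2) ℂ, (U*P*Uᴴ) * (U*Q*Uᴴ) = U*(P*Q)*Uᴴ := by
    intro P Q
    have h' : Uᴴ * (U * (Q * Uᴴ)) = Q * Uᴴ := by rw [← mul_assoc, hU'U, one_mul]
    simp only [mul_assoc]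
    rw [h']
  have unconj : ∀ X : Matrix (Fin 2) (Fin 2) ℂ, Uᴴ * (U * X * Uᴴ) * U = X := by
    intro X
    rw [show Uᴴ * (U * X * Uᴴ) = X * Uᴴ by rw [← mul_assoc, ← mul_assoc, hU'U, one_mul],
      mul_assoc, hU'U, mul_one]
  have hD : U * A * Uᴴ = !![(-I), 0; 0, I] := by
    rw [hUA, mul_assoc, hUU, mul_one]
  set M := U * B * Uᴴ with hM
  have hMu : M ∈ Matrix.unitaryGroup (Fin 2) ℂ :=
    mul_mem (mul_mem hUu hu2) (Unitary.star_mem hUu)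
  have hMdet : M.det = 1 := by
    rw [hM, Matrix.det_mul, Matrix.det_mul, Matrix.det_conjTranspose, hUdet, hd2]
    simp
  have hanti : M * !![(-I), 0; 0, I] = -(!![(-I), 0; 0, I] * M) := by
    rw [← hD, hM, key B A, key A B, h]
    simp [Matrix.mul_neg, Matrix.neg_mul]
  have em00 := (Matrix.ext_iff.mpr hanti) 0 0
  have em11 := (Matrix.ext_iff.mpr hanti) 1 1
  simp only [Matrix.mul_apply, Fin.sum_univ_two, Matrix.neg_apply, Matrix.cons_val',
    Matrix.cons_val_zero, Matrix.cons_val_one, Matrix.head_cons, Matrix.empty_val',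
    Matrix.cons_val_fin_one, Matrix.head_fin_const, Matrix.of_apply] at em00 em11
  have h00 : M 0 0 = 0 := by
    have e' : (2*I) * (M 0 0) = 0 := by linear_combination -em00
    rcases mul_eq_zero.mp e' with h' | h'
    · exact absurd h' (by simp [Complex.I_ne_zero])
    · exact h'
  have h11 : M 1 1 = 0 := by
    have e' : (2*I) * (M 1 1) = 0 := by linear_combination em11
    rcases mul_eq_zero.mp e' with h' | h'
    · exact absurd h' (by simp [Complex.I_ne_zero])
    · exact h'
  obtain ⟨lam, hlam, hMform⟩ := offdiag_form' M hMu hMdet h00 h11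
  refine ⟨U, hUmem, lam, hlam, ?_, ?_⟩
  · rw [← hD]
    exact (unconj A).symm
  · rw [← hMform, hM]
    exact (unconj B).symm
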